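/- Let α be a Hermitian complex L×L matrix with α > 1 (i.e. α − 1 is positive definite). Then for every unitary L×L matrix U the matrix U + α is invertible, and ∫_{U(L)} (U + α)^{-1} U dU = 0 with respect to the normalized Haar measure on the unitary group U(L). -/

import Mathlib

open MeasureTheory Matrix
open scoped ComplexOrder Real

noncomputable section

/-- The space of complex `L × L` matrices. -/
abbrev Mat (L : ℕ) := Matrix (Fin L) (Fin L) ℂ

instance (L : ℕ) : MeasurableSpace (Matrix.unitaryGroup (Fin L) ℂ) := borel _

instance (L : ℕ) : BorelSpace (Matrix.unitaryGroup (Fin L) ℂ) := ⟨rfl⟩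

lemma keyA {L : ℕ} {α : Mat L} (hα : (α - (1 : Mat L)).PosDef)
    (z : ℂ) (hz : ‖z‖ ≤ 1) {U : Mat L} (hU : U ∈ Matrix.unitaryGroup (Fin L) ℂ) :
    IsUnit (z • U + α) := by
  have key : ∀ x : Fin L → ℂ, (z • U + α) *ᵥ x = 0 → x = 0 := by
    intro x hvx
    by_contra hx0
    set x' : EuclideanSpace ℂ (Fin L) := (WithLp.equiv 2 _).symm x with hx'
    set u' : EuclideanSpace ℂ (Fin L) := (WithLp.equiv 2 _).symm (U *ᵥ x) with hu'
    have hUU : Uᴴ * U = 1 := by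
      have := hU.1
      rwa [Matrix.star_eq_conjTranspose] at this
    have hinner_u : (inner ℂ u' u' : ℂ) = inner ℂ x' x' := by
      change (U *ᵥ x) ⬝ᵥ star (U *ᵥ x) = x ⬝ᵥ star x
      rw [dotProduct_comm, Matrix.star_mulVec, ← Matrix.dotProduct_mulVec, Matrix.mulVec_mulVec, hUU,
        Matrix.one_mulVec, dotProduct_comm]
    have hnorm_u : ‖u'‖ = ‖x'‖ := by
      rw [@norm_eq_sqrt_re_inner ℂ, @norm_eq_sqrt_re_inner ℂ, hinner_u]
    have ht : ‖star x ⬝ᵥ (U *ᵥ x)‖ ≤ ‖x'‖ ^ 2 := by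
      have h := norm_inner_le_norm (𝕜 := ℂ) x' u'
      have e : (inner ℂ x' u') = star x ⬝ᵥ (U *ᵥ x) := by
        change (U *ᵥ x) ⬝ᵥ star x = _; rw [dotProduct_comm]
      rw [e] at h
      calc ‖star x ⬝ᵥ (U *ᵥ x)‖ ≤ ‖x'‖ * ‖u'‖ := h
      _ = ‖x'‖ ^ 2 := by rw [hnorm_u]; ring
    have hb : (0 : ℂ) < star x ⬝ᵥ ((α - 1) *ᵥ x) := hα.dotProduct_mulVec_pos hx0
    have hbre : 0 < (star x ⬝ᵥ ((α - 1) *ᵥ x)).re := (Complex.lt_def.mp hb).1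
    have hnre : (star x ⬝ᵥ x).re = ‖x'‖ ^ 2 := by
      have h1 : (star x ⬝ᵥ x : ℂ) = inner ℂ x' x' := by
        change _ = x ⬝ᵥ star x; rw [dotProduct_comm]
      rw [h1]
      exact_mod_cast inner_self_eq_norm_sq (𝕜 := ℂ) x'
    have hs : star x ⬝ᵥ ((z • U + α) *ᵥ x) = 0 := by rw [hvx, dotProduct_zero]
    rw [Matrix.add_mulVec, Matrix.smul_mulVec, dotProduct_add,
      dotProduct_smul] at hs
    have hαx : star x ⬝ᵥ (α *ᵥ x) = star x ⬝ᵥ ((α - 1) *ᵥ x) + star x ⬝ᵥ x := by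
      rw [Matrix.sub_mulVec, dotProduct_sub, Matrix.one_mulVec]; ring
    rw [hαx, smul_eq_mul] at hs
    have hre := congrArg Complex.re hs
    rw [Complex.add_re, Complex.add_re, Complex.zero_re] at hre
    have hlow : -(‖x'‖ ^ 2) ≤ (z * (star x ⬝ᵥ (U *ᵥ x))).re := by
      have h1 : -‖z * (star x ⬝ᵥ (U *ᵥ x))‖ ≤ (z * (star x ⬝ᵥ (U *ᵥ x))).re := by
        have := Complex.abs_re_le_norm (z * (star x ⬝ᵥ (U *ᵥ x)))
        cases abs_le.mp this with
        | intro h _ => linarith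
      have h2 : ‖z * (star x ⬝ᵥ (U *ᵥ x))‖ ≤ ‖x'‖ ^ 2 := by
        rw [norm_mul]
        calc ‖z‖ * ‖star x ⬝ᵥ (U *ᵥ x)‖ ≤ 1 * (‖x'‖ ^ 2) := by
              apply mul_le_mul hz ht (norm_nonneg _) zero_le_one
        _ = ‖x'‖ ^ 2 := one_mul _
      linarith
    linarith
  rw [← Matrix.mulVec_injective_iff_isUnit]
  intro a b hab
  have h := key (a - b) (by rw [Matrix.mulVec_sub, hab, sub_self])
  exact sub_eq_zero.mp h

lemma unitary_isCompact (L : ℕ) : IsCompact ((Matrix.unitaryGroup (Fin L) ℂ : Set (Mat L))) := by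
  have hsub : (Matrix.unitaryGroup (Fin L) ℂ : Set (Mat L)) ⊆
      Set.pi Set.univ (fun _ : Fin L => Set.pi Set.univ fun _ : Fin L => Metric.closedBall (0 : ℂ) 1) := by
    intro U hU
    intro i _ 
    intro j _
    simpa [Complex.dist_eq] using entry_norm_bound_of_unitary hU i j
  have hK : IsCompact (Set.pi Set.univ (fun _ : Fin L => Set.pi Set.univ fun _ : Fin L => Metric.closedBall (0 : ℂ) 1)) := by
    exact isCompact_univ_pi fun _ => isCompact_univ_pi fun _ => isCompact_closedBall 0 1
  have hclosed : IsClosed ((Matrix.unitaryGroup (Fin L) ℂ : Set (Mat L))) := by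
    have : (Matrix.unitaryGroup (Fin L) ℂ : Set (Mat L)) =
        {U : Mat L | star U * U = 1} ∩ {U : Mat L | U * star U = 1} := by
      ext U
      simp [Matrix.unitaryGroup, Unitary.mem_iff, Matrix.star_eq_conjTranspose]

    rw [this]
    exact ((isClosed_eq ((continuous_id.matrix_conjTranspose).matrix_mul continuous_id)
        continuous_const).inter (isClosed_eq (continuous_id.matrix_mul
        continuous_id.matrix_conjTranspose) continuous_const))
  exact hK.of_isClosed_subset hclosed hsub

instance (L : ℕ) : CompactSpace (Matrix.unitaryGroup (Fin L) ℂ) :=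
  isCompact_iff_compactSpace.mp (unitary_isCompact L)

instance (L : ℕ) : MeasurableMul (Matrix.unitaryGroup (Fin L) ℂ) := by
  constructor
  · intro c
    apply Continuous.measurable
    apply Continuous.subtype_mk
    exact continuous_const.matrix_mul continuous_subtype_val
  · intro c
    apply Continuous.measurable
    apply Continuous.subtype_mk
    exact continuous_subtype_val.matrix_mul continuous_const

def gfun {L : ℕ} (α : Mat L) (i j : Fin L) (z : ℂ) (W : Mat L) : ℂ :=
  ((z • W + α).det)⁻¹ * ((Matrix.adjugate (z • W + α) * (z • W)) i j)

lemma gfun_eq {L : ℕ} (α W : Mat L) (i j : Fin L) (z : ℂ) :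
    ((z • W + α)⁻¹ * (z • W)) i j = gfun α i j z W := by
  rw [gfun, Matrix.inv_def, Ring.inverse_eq_inv', Matrix.smul_mul, Matrix.smul_apply, smul_eq_mul]

lemma diff_entries_det {L : ℕ} {f : ℂ → Mat L} (hf : ∀ i j, Differentiable ℂ fun z => f z i j) :
    Differentiable ℂ fun z => (f z).det := by
  have h : (fun z => (f z).det) =
      fun z => ∑ σ : Equiv.Perm (Fin L), ((Equiv.Perm.sign σ : ℤ) : ℂ) * ∏ k, f z (σ k) k := by
    funext z
    rw [Matrix.det_apply]
    congr 1
    funext σ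
    simp [Units.smul_def, zsmul_eq_mul]
  rw [h]
  apply Differentiable.fun_sum
  intro σ _
  exact (Differentiable.fun_finset_prod (fun k _ => hf (σ k) k)).const_mul _

lemma diff_entry {L : ℕ} (α U : Mat L) (i j : Fin L) :
    Differentiable ℂ fun z : ℂ => (z • U + α) i j := by
  have : (fun z : ℂ => (z • U + α) i j) = fun z => z * U i j + α i j := by
    funext z; simp [Matrix.add_apply, Matrix.smul_apply, smul_eq_mul]
  rw [this]
  exact (differentiable_id.mul_const _).add_const _

lemma diff_det {L : ℕ} (α U : Mat L) : Differentiable ℂ fun z : ℂ => (z • U + α).det :=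
  diff_entries_det fun i j => diff_entry α U i j

lemma diff_num {L : ℕ} (α U : Mat L) (i j : Fin L) :
    Differentiable ℂ fun z : ℂ => (Matrix.adjugate (z • U + α) * (z • U)) i j := by
  have h : (fun z : ℂ => (Matrix.adjugate (z • U + α) * (z • U)) i j) =
      fun z => ∑ k, Matrix.adjugate (z • U + α) i k * (z * U k j) := by
    funext z
    simp [Matrix.mul_apply, Matrix.smul_apply, smul_eq_mul]
  rw [h]
  apply Differentiable.fun_sum
  intro k _
  have hadj : Differentiable ℂ fun z : ℂ => Matrix.adjugate (z • U + α) i k := by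
    have h2 : (fun z : ℂ => Matrix.adjugate (z • U + α) i k) =
        fun z => ((z • U + α).updateRow k (Pi.single i 1)).det := by
      funext z; rw [Matrix.adjugate_apply]
    rw [h2]
    apply diff_entries_det
    intro a b
    by_cases hak : a = k
    · subst hak
      simp only [Matrix.updateRow_self]
      exact differentiable_const _
    · simp only [Matrix.updateRow_apply, hak, if_false]
      exact diff_entry α U a b
  exact hadj.mul ((differentiable_id.mul_const _))

lemma det_ne_zero {L : ℕ} {α : Mat L} (hα : (α - (1 : Mat L)).PosDef)
    {z : ℂ} (hz : ‖z‖ ≤ 1) {U : Mat L} (hU : U ∈ Matrix.unitaryGroup (Fin L) ℂ) :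
    (z • U + α).det ≠ 0 :=
  ((Matrix.isUnit_iff_isUnit_det _).mp (keyA hα z hz hU)).ne_zero

lemma circleZero {L : ℕ} {α : Mat L} (hα : (α - (1 : Mat L)).PosDef)
    {U : Mat L} (hU : U ∈ Matrix.unitaryGroup (Fin L) ℂ) (i j : Fin L) :
    ∫ θ in (0:ℝ)..(2*π), gfun α i j (circleMap 0 1 θ) U = 0 := by
  set f : ℂ → ℂ := fun z => gfun α i j z U with hf
  have hdiffAt : ∀ z ∈ Metric.closedBall (0:ℂ) 1, DifferentiableAt ℂ f z := by
    intro z hz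
    have hz1 : ‖z‖ ≤ 1 := by simpa [Complex.dist_eq] using Metric.mem_closedBall.mp hz
    exact (((diff_det α U) z).inv (det_ne_zero hα hz1 hU)).mul ((diff_num α U i j) z)
  have hc : ContinuousOn f (Metric.closedBall (0:ℂ) 1) :=
    fun z hz => (hdiffAt z hz).continuousAt.continuousWithinAt
  have hcauchy := Complex.circleIntegral_sub_inv_smul_of_differentiable_on_off_countable
    (s := ∅) Set.countable_empty (show (0:ℂ) ∈ Metric.ball 0 1 by simp) hc
    (fun x hx => hdiffAt x (Metric.ball_subset_closedBall hx.1))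
  have hf0 : f 0 = 0 := by simp [hf, gfun]
  rw [hf0, smul_zero] at hcauchy
  rw [circleIntegral] at hcauchy
  have heq : ∀ θ : ℝ, deriv (circleMap 0 1) θ • ((circleMap 0 1 θ - 0)⁻¹ • f (circleMap 0 1 θ))
      = Complex.I * f (circleMap 0 1 θ) := by
    intro θ
    have hne : circleMap 0 1 θ ≠ 0 := circleMap_ne_center one_ne_zero
    rw [deriv_circleMap, sub_zero, smul_eq_mul, smul_eq_mul]
    field_simp
  simp only [heq] at hcauchy
  rw [intervalIntegral.integral_const_mul] at hcauchy
  rcases mul_eq_zero.mp hcauchy with h | h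
  · exact absurd h Complex.I_ne_zero
  · exact h

set_option maxHeartbeats 1000000 in
theorem stmt15 (L : ℕ) (hL : 1 ≤ L)
    (α : Mat L) (hαherm : α.IsHermitian)
    (hα : (α - (1 : Mat L)).PosDef)
    (μ : Measure (Matrix.unitaryGroup (Fin L) ℂ))
    [μ.IsHaarMeasure] [IsProbabilityMeasure μ] :
    (∀ U : Matrix.unitaryGroup (Fin L) ℂ, IsUnit ((U : Mat L) + α)) ∧
    (∀ i j : Fin L,
      (∫ (U : Matrix.unitaryGroup (Fin L) ℂ),
          (((U : Mat L) + α)⁻¹ * (U : Mat L)) i j ∂μ) = (0 : Mat L) i j) := by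
  constructor
  · intro U
    have := keyA hα 1 (by simp) U.2
    rwa [one_smul] at this
  intro i j
  set G := Matrix.unitaryGroup (Fin L) ℂ
  set f : G → ℂ := fun U => (((U : Mat L) + α)⁻¹ * (U : Mat L)) i j with hfdef
  set F : ℝ × G → ℂ := fun p => gfun α i j (circleMap 0 1 p.1) (p.2 : Mat L) with hFdef
  set I : ℂ := ∫ U : G, f U ∂μ with hIdef
  -- continuity and boundedness of F
  set g2 : ℂ × G → ℂ := fun q => gfun α i j q.1 (q.2 : Mat L) with hg2
  have hmatc : Continuous fun q : ℂ × G => q.1 • ((q.2 : Mat L)) + α :=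
    (continuous_fst.smul ((continuous_subtype_val).comp continuous_snd)).add continuous_const
  have hnumc : Continuous fun q : ℂ × G => (Matrix.adjugate (q.1 • ((q.2 : Mat L)) + α)
      * (q.1 • ((q.2 : Mat L)))) i j :=
    (hmatc.matrix_adjugate.matrix_mul
      (continuous_fst.smul ((continuous_subtype_val).comp continuous_snd))).matrix_elem i j
  set S : Set (ℂ × G) := Metric.sphere 0 1 ×ˢ Set.univ with hS
  have hSne : ∀ q ∈ S, (q.1 • ((q.2 : Mat L)) + α).det ≠ 0 := by
    intro q hq
    have h1 : ‖q.1‖ ≤ 1 := by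
      have := hq.1
      simp only [Metric.mem_sphere, Complex.dist_eq, sub_zero] at this
      simp [this]
    exact det_ne_zero hα h1 q.2.2
  have hg2cont : ContinuousOn g2 S := by
    apply ContinuousOn.mul
    · exact ContinuousOn.inv₀ (hmatc.matrix_det.continuousOn) hSne
    · exact hnumc.continuousOn
  have hScompact : IsCompact S := (isCompact_sphere 0 1).prod isCompact_univ
  obtain ⟨C, hC⟩ := hScompact.exists_bound_of_continuousOn hg2cont
  have hmemS : ∀ p : ℝ × G, ((circleMap 0 1 p.1 : ℂ), p.2) ∈ S := by
    intro p
    refine ⟨?_, Set.mem_univ _⟩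
    simp [Metric.mem_sphere, Complex.dist_eq]
  have hFcont : Continuous F := by
    have : F = g2 ∘ fun p : ℝ × G => ((circleMap 0 1 p.1 : ℂ), p.2) := rfl
    rw [this]
    exact hg2cont.comp_continuous
      ((continuous_circleMap 0 1).comp continuous_fst |>.prodMk continuous_snd) hmemS
  have hFbound : ∀ p : ℝ × G, ‖F p‖ ≤ C := by
    intro p
    exact hC (circleMap 0 1 p.1, p.2) (hmemS p)
  -- measure on ℝ
  set ν : Measure ℝ := volume.restrict (Set.Ioc (0:ℝ) (2*π)) with hν
  haveI : IsFiniteMeasure ν := by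
    constructor
    rw [hν, Measure.restrict_apply_univ, Real.volume_Ioc]
    exact ENNReal.ofReal_lt_top
  have hFint : Integrable F (ν.prod μ) := by
    refine ⟨hFcont.aestronglyMeasurable, ?_⟩
    exact (hasFiniteIntegral_const C).mono' (Filter.Eventually.of_forall hFbound)
  -- invariance step
  have hinv : ∀ θ : ℝ, (∫ U : G, F (θ, U) ∂μ) = I := by
    intro θ
    set z : ℂ := circleMap 0 1 θ with hz
    have hz1 : ‖z‖ = 1 := by
      rw [hz, norm_circleMap_zero]; norm_num
    have hmem : z • (1 : Mat L) ∈ Matrix.unitaryGroup (Fin L) ℂ := by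
      rw [Matrix.mem_unitaryGroup_iff]
      have : star (z • (1 : Mat L)) = star z • (1 : Mat L) := by
        rw [star_smul, star_one]
      rw [this, Matrix.smul_mul, Matrix.mul_smul, one_mul, smul_smul]
      have : z * star z = 1 := by
        rw [Complex.star_def, Complex.mul_conj]
        have h2 : Complex.normSq z = 1 := by
          rw [Complex.normSq_eq_norm_sq, hz1]; norm_num
        rw [h2, Complex.ofReal_one]
      rw [this, one_smul]
    set gθ : G := ⟨z • (1 : Mat L), hmem⟩ with hgθ
    have hcomp : ∀ U : G, f (gθ * U) = F (θ, U) := by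
      intro U
      have hcoe : ((gθ * U : G) : Mat L) = z • (U : Mat L) := by
        have : ((gθ * U : G) : Mat L) = (z • (1 : Mat L)) * (U : Mat L) := rfl
        rw [this, Matrix.smul_mul, one_mul]
      rw [hfdef]
      simp only
      rw [hcoe, gfun_eq]
    calc (∫ U : G, F (θ, U) ∂μ) = ∫ U : G, f (gθ * U) ∂μ := by
          congr 1; funext U; rw [hcomp U]
    _ = I := by rw [integral_mul_left_eq_self f gθ]
  -- Fubini
  have hswap := MeasureTheory.integral_integral_swap (f := fun (θ:ℝ) (U:G) => F (θ, U)) hFint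
  have hLHS : (∫ θ : ℝ, (∫ U : G, F (θ, U) ∂μ) ∂ν) = (2*π) • I := by
    simp only [hinv]
    rw [integral_const]
    congr 1
    rw [hν, measureReal_restrict_apply_univ, Real.volume_real_Ioc]
    rw [max_eq_left (by nlinarith [Real.pi_pos])]
    ring
  have hRHS : (∫ U : G, (∫ θ : ℝ, F (θ, U) ∂ν) ∂μ) = 0 := by
    have hz : ∀ U : G, (∫ θ : ℝ, F (θ, U) ∂ν) = 0 := by
      intro U
      have h1 : (∫ θ : ℝ, F (θ, U) ∂ν) = ∫ θ in (0:ℝ)..(2*π), F (θ, U) := by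
        rw [intervalIntegral.integral_of_le (by positivity)]
      rw [h1]
      exact circleZero hα U.2 i j
    simp only [hz]
    exact integral_zero _ _
  rw [hswap, hRHS] at hLHS
  have hI : I = 0 := by
    rcases smul_eq_zero.mp hLHS.symm with h | h
    · have hpos : (0:ℝ) < 2*π := by positivity
      exact absurd h hpos.ne'
    · exact h
  rw [Matrix.zero_apply]
  exact hI
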